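/- Let C be a category with faithful functor Q represented by an object A₀, and let A⁰ be a left or right indicator in C. Then an automorphism Φ of C is inner if and only if there exist isomorphisms σ : A₀ → Φ(A₀) and τ : A⁰ → Φ(A⁰) such that Φ(ν) = τ ∘ ν ∘ σ⁻¹ for every morphism ν : A₀ → A⁰. -/

import Mathlib

open CategoryTheory

universe u v w

section Aux

variable {C : Type u} [Category.{v} C] (Q : C ⥤ Type w) (A₀ : C) (x₀ : Q.obj A₀)

/-- The representation bijection `(A₀ ⟶ A) ≃ Q.obj A`. -/
noncomputable def repEquiv
    (hrep : ∀ (A : C) (a : Q.obj A), ∃! α : A₀ ⟶ A, Q.map α x₀ = a) (A : C) :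
    (A₀ ⟶ A) ≃ Q.obj A where
  toFun α := Q.map α x₀
  invFun a := (hrep A a).choose
  left_inv α := (hrep A (Q.map α x₀)).unique (hrep A (Q.map α x₀)).choose_spec.1 rfl
  right_inv a := (hrep A a).choose_spec.1

end Aux

theorem stmt13 {C : Type u} [Category.{v} C] (Q : C ⥤ Type w) [Q.Faithful]
    (A₀ : C) (x₀ : Q.obj A₀)
    (hrep : ∀ (A : C) (a : Q.obj A), ∃! α : A₀ ⟶ A, Q.map α x₀ = a)
    (Atop : C)
    (hind :
      (∀ (A B : C) (s : Q.obj A ≃ Q.obj B),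
        (∀ ν : B ⟶ Atop, ∃ μ : A ⟶ Atop, Q.map μ = Q.map ν ∘ ⇑s) →
        ∃ γ : A ≅ B, Q.map γ.hom = ⇑s) ∨
      (∀ (A B : C) (s : Q.obj A ≃ Q.obj B),
        (∀ ν : Atop ⟶ A, ∃ μ : Atop ⟶ B, Q.map μ = ⇑s ∘ Q.map ν) →
        ∃ γ : A ≅ B, Q.map γ.hom = ⇑s))
    (Φ Φinv : C ⥤ C) (hΦ1 : Φ ⋙ Φinv = 𝟭 C) (hΦ2 : Φinv ⋙ Φ = 𝟭 C) :
    Nonempty (𝟭 C ≅ Φ) ↔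
      ∃ (σ : A₀ ≅ Φ.obj A₀) (τ : Atop ≅ Φ.obj Atop),
        ∀ ν : A₀ ⟶ Atop, Φ.map ν = σ.inv ≫ ν ≫ τ.hom := by
  constructor
  · rintro ⟨η⟩
    refine ⟨η.app A₀, η.app Atop, fun ν => ?_⟩
    have h := η.hom.naturality ν
    simp only [Functor.id_map] at h
    simp only [Iso.app_inv, Iso.app_hom]
    rw [h, Iso.inv_hom_id_app_assoc]
  · rintro ⟨σ, τ, hστ⟩
    -- Faithfulness of Φ
    have hfaith : ∀ {X Y : C} (f g : X ⟶ Y), Φ.map f = Φ.map g → f = g := by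
      intro X Y f g h
      have h2 := congrArg Φinv.map h
      rw [← Functor.comp_map, ← Functor.comp_map, Functor.congr_hom hΦ1 f,
        Functor.congr_hom hΦ1 g] at h2
      simp only [Functor.id_map] at h2
      exact (cancel_mono (eqToHom _)).mp ((cancel_epi (eqToHom _)).mp h2)
    -- Fullness of Φ
    have hfull : ∀ (X Y : C) (g : Φ.obj X ⟶ Φ.obj Y), ∃ f : X ⟶ Y, Φ.map f = g := by
      intro X Y g
      refine ⟨eqToHom (Functor.congr_obj hΦ1.symm X) ≫ Φinv.map g ≫
        eqToHom (Functor.congr_obj hΦ1 Y), ?_⟩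
      rw [Φ.map_comp, Φ.map_comp, ← Functor.comp_map, Functor.congr_hom hΦ2 g]
      simp [eqToHom_map]
    -- key consequence of the hypothesis
    have hkey : ∀ δ : A₀ ⟶ Atop, σ.hom ≫ Φ.map δ = δ ≫ τ.hom := by
      intro δ
      rw [hστ δ, Iso.hom_inv_id_assoc]
    -- bijection on hom-sets
    have hbij : ∀ A : C, Function.Bijective (fun α : A₀ ⟶ A => σ.hom ≫ Φ.map α) := by
      intro A
      constructor
      · intro α β h
        exact hfaith _ _ ((Iso.cancel_iso_hom_left σ _ _).mp h)
      · intro β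
        obtain ⟨f, hf⟩ := hfull A₀ A (σ.inv ≫ β)
        exact ⟨f, by simp [hf]⟩
    let s : ∀ A : C, Q.obj A ≃ Q.obj (Φ.obj A) := fun A =>
      (repEquiv Q A₀ x₀ hrep A).symm.trans
        ((Equiv.ofBijective _ (hbij A)).trans (repEquiv Q A₀ x₀ hrep (Φ.obj A)))
    have hs : ∀ (A : C) (α : A₀ ⟶ A),
        s A (Q.map α x₀) = Q.map (σ.hom ≫ Φ.map α) x₀ := by
      intro A α
      show s A (repEquiv Q A₀ x₀ hrep A α) = _
      simp only [s, Equiv.trans_apply, Equiv.symm_apply_apply]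
      rfl
    have hsurj : ∀ (A : C) (a : Q.obj A), ∃ α : A₀ ⟶ A, Q.map α x₀ = a :=
      fun A a => ⟨(hrep A a).choose, (hrep A a).choose_spec.1⟩
    -- componentwise isomorphism
    have hγ : ∀ A : C, ∃ γ : A ≅ Φ.obj A, Q.map γ.hom = ⇑(s A) := by
      intro A
      rcases hind with h | h
      · apply h A (Φ.obj A) (s A)
        intro ν
        obtain ⟨μ, hμ⟩ := hfull A Atop (ν ≫ τ.hom)
        refine ⟨μ, ?_⟩
        funext a
        obtain ⟨α, rfl⟩ := hsurj A a
        have key : α ≫ μ = σ.hom ≫ Φ.map α ≫ ν := by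
          have h1 : σ.hom ≫ Φ.map (α ≫ μ) = (α ≫ μ) ≫ τ.hom := hkey (α ≫ μ)
          rw [Φ.map_comp, hμ] at h1
          have h2 : (σ.hom ≫ Φ.map α ≫ ν) ≫ τ.hom = (α ≫ μ) ≫ τ.hom := by
            simpa using h1
          exact ((Iso.cancel_iso_hom_right _ _ τ).mp h2).symm
        simp only [Function.comp_apply, hs]
        rw [← FunctorToTypes.map_comp_apply, ← FunctorToTypes.map_comp_apply, key]
        simp
      · apply h A (Φ.obj A) (s A)
        intro ν
        refine ⟨τ.hom ≫ Φ.map ν, ?_⟩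
        funext t
        obtain ⟨β, rfl⟩ := hsurj Atop t
        simp only [Function.comp_apply]
        rw [← FunctorToTypes.map_comp_apply, ← FunctorToTypes.map_comp_apply, hs]
        rw [← Category.assoc, ← hkey β, Category.assoc, ← Φ.map_comp]
    choose γ hγspec using hγ
    refine ⟨NatIso.ofComponents (fun A => γ A) ?_⟩
    intro A B f
    apply Q.map_injective
    ext a
    obtain ⟨α, rfl⟩ := hsurj A a
    have r : Q.map ((γ A).hom ≫ Φ.map f) (Q.map α x₀)
        = Q.map (σ.hom ≫ Φ.map (α ≫ f)) x₀ := by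
      rw [FunctorToTypes.map_comp_apply, congrFun (hγspec A) (Q.map α x₀), hs A α,
        ← FunctorToTypes.map_comp_apply]
      simp
    calc Q.map ((𝟭 C).map f ≫ (γ B).hom) (Q.map α x₀)
        = Q.map (γ B).hom (Q.map (α ≫ f) x₀) := by
          simp only [Functor.id_map, FunctorToTypes.map_comp_apply]
      _ = Q.map (σ.hom ≫ Φ.map (α ≫ f)) x₀ := by
          rw [congrFun (hγspec B) _, hs B (α ≫ f)]
      _ = Q.map ((γ A).hom ≫ Φ.map f) (Q.map α x₀) := r.symm
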